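/- Let G be an abelian group and let τ : G → G be a group automorphism. Let F₊ = {x ∈ G : τ(x) = x} and F₋ = {x ∈ G : τ(x) = −x}, and suppose both F₊ and F₋ are finite. Consider the quotient set K = G/∼, where x ∼ y if and only if y = x or y = −x, with the action on K induced by τ. Then the set of elements of K fixed by τ is finite, and 2 · |{P ∈ K : τ(P) = P}| = |F₊| + |F₋|. -/

import Mathlib

/-- The equivalence relation on an abelian group identifying `x` with `−x`. -/
def negQuotSetoid (G : Type*) [AddCommGroup G] : Setoid G where
  r x y := y = x ∨ y = -x
  iseqv := by
    constructor
    · intro x; exact Or.inl rfl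
    · rintro x y (rfl | rfl)
      · exact Or.inl rfl
      · exact Or.inr (neg_neg x).symm
    · rintro x y z h1 h2
      rcases h1 with rfl | rfl
      · exact h2
      · rcases h2 with rfl | rfl
        · exact Or.inr rfl
        · exact Or.inl (neg_neg x)

/-- Let `G` be an abelian group and `τ` an automorphism of `G`. Let
`F₊ = {x : τ x = x}` and `F₋ = {x : τ x = −x}` be finite. Let `K = G/(x ∼ ±x)` and let
`τK` be the map induced by `τ` on `K`.  Then the fixed-point set of `τK` is finite and
`2·|Fix(τK)| = |F₊| + |F₋|`. -/
theorem stmt14 (G : Type*) [AddCommGroup G] (τ : G ≃+ G)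
    (hplus : {x : G | τ x = x}.Finite) (hminus : {x : G | τ x = -x}.Finite)
    (τK : Quotient (negQuotSetoid G) → Quotient (negQuotSetoid G))
    (hτK : ∀ x : G,
      τK (Quotient.mk (negQuotSetoid G) x) = Quotient.mk (negQuotSetoid G) (τ x)) :
    {P : Quotient (negQuotSetoid G) | τK P = P}.Finite ∧
    2 * {P : Quotient (negQuotSetoid G) | τK P = P}.ncard =
      {x : G | τ x = x}.ncard + {x : G | τ x = -x}.ncard := by
  classical
  have hneg : ∀ x : G, Quotient.mk (negQuotSetoid G) (-x) = Quotient.mk (negQuotSetoid G) x :=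
    fun x => Quotient.sound (Or.inr (neg_neg x).symm)
  have hmkeq : ∀ x y : G, Quotient.mk (negQuotSetoid G) y = Quotient.mk (negQuotSetoid G) x ↔
      (y = x ∨ y = -x) := by
    intro x y
    constructor
    · intro h
      have := Quotient.exact h
      rcases this with h1 | h1
      · exact Or.inl h1.symm
      · right; rw [h1, neg_neg]
    · rintro (rfl | rfl)
      · rfl
      · exact hneg x
  -- the fixed set is the image of A ∪ B
  have hfix : {P : Quotient (negQuotSetoid G) | τK P = P} =
      Quotient.mk (negQuotSetoid G) '' ({x : G | τ x = x} ∪ {x : G | τ x = -x}) := by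
    ext P
    obtain ⟨x, rfl⟩ := Quotient.exists_rep P
    simp only [Set.mem_setOf_eq, Set.mem_image, Set.mem_union]
    constructor
    · intro h
      rw [hτK] at h
      rcases (hmkeq x (τ x)).1 h with h1 | h1
      · exact ⟨x, Or.inl h1, rfl⟩
      · exact ⟨x, Or.inr h1, rfl⟩
    · rintro ⟨y, hy, h⟩
      rw [← h, hτK]
      rcases hy with h1 | h1
      · rw [h1]
      · rw [h1, hneg]
  have hU := hplus.union hminus
  have hfin : {P : Quotient (negQuotSetoid G) | τK P = P}.Finite := by
    rw [hfix]; exact hU.image _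
  refine ⟨hfin, ?_⟩
  -- move to finsets
  set F : Finset G := hU.toFinset with hF
  have hFmem : ∀ x : G, x ∈ F ↔ (τ x = x ∨ τ x = -x) := by
    intro x; simp [hF, Set.Finite.mem_toFinset]
  have hFneg : ∀ x : G, x ∈ F → -x ∈ F := by
    intro x hx
    rw [hFmem] at hx ⊢
    rcases hx with h | h
    · left; rw [map_neg, h]
    · right; rw [map_neg, h, neg_neg]
  set I : Finset (Quotient (negQuotSetoid G)) := F.image (Quotient.mk (negQuotSetoid G)) with hI
  set C : Finset G := hplus.toFinset ∩ hminus.toFinset with hC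
  have hCmem : ∀ x : G, x ∈ C ↔ (τ x = x ∧ τ x = -x) := by
    intro x; simp [hC, Set.Finite.mem_toFinset]
  -- ncards
  have h1 : {P : Quotient (negQuotSetoid G) | τK P = P}.ncard = I.card := by
    rw [hfix, Set.ncard_eq_toFinset_card _ (hU.image _)]
    congr 1
    ext P
    simp only [Set.Finite.mem_toFinset, Set.mem_image, Set.mem_union, hI, Finset.mem_image,
      hFmem, Set.mem_setOf_eq]
  have h2 : {x : G | τ x = x}.ncard = hplus.toFinset.card := Set.ncard_eq_toFinset_card _ hplus
  have h3 : {x : G | τ x = -x}.ncard = hminus.toFinset.card := Set.ncard_eq_toFinset_card _ hminus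
  rw [h1, h2, h3]
  -- card_union_add_card_inter
  have hunion : hplus.toFinset ∪ hminus.toFinset = F := by
    ext x; simp [hFmem, Set.Finite.mem_toFinset]
  have hsum : hplus.toFinset.card + hminus.toFinset.card = F.card + C.card := by
    rw [← Finset.card_union_add_card_inter, hunion, hC]
  rw [hsum]
  have hFfib : F.card = ∑ P ∈ I, (F.filter (fun y => Quotient.mk (negQuotSetoid G) y = P)).card :=
    Finset.card_eq_sum_card_fiberwise (fun x hx => Finset.mem_image_of_mem _ hx)
  have hCfib : C.card = ∑ P ∈ I, (C.filter (fun y => Quotient.mk (negQuotSetoid G) y = P)).card := by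
    refine Finset.card_eq_sum_card_fiberwise (fun x hx => Finset.mem_image_of_mem _ ?_)
    rw [hFmem]; rw [Finset.mem_coe, hCmem] at hx; exact Or.inl hx.1
  rw [hFfib, hCfib, ← Finset.sum_add_distrib]
  rw [Finset.sum_congr rfl (g := fun _ => 2) ?_, Finset.sum_const, smul_eq_mul, mul_comm]
  intro P hP
  rw [hI, Finset.mem_image] at hP
  obtain ⟨x, hxF, rfl⟩ := hP
  have hfilF : F.filter (fun y => Quotient.mk (negQuotSetoid G) y = Quotient.mk (negQuotSetoid G) x)
      = ({x, -x} : Finset G) := by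
    ext y
    simp only [Finset.mem_filter, Finset.mem_insert, Finset.mem_singleton, hmkeq]
    constructor
    · exact fun h => h.2
    · rintro (rfl | rfl)
      · exact ⟨hxF, Or.inl rfl⟩
      · exact ⟨hFneg x hxF, Or.inr rfl⟩
  rw [hfilF]
  by_cases hx2 : x = -x
  · -- fiber has 1 elt, C-fiber has 1 elt
    have hxy : ({x, -x} : Finset G) = {x} := by rw [← hx2]; simp
    rw [hxy, Finset.card_singleton]
    have hxC : x ∈ C := by
      rw [hCmem]
      rcases (hFmem x).1 hxF with h | h
      · exact ⟨h, h.trans hx2⟩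
      · exact ⟨h.trans hx2.symm, h⟩
    have hfilC : C.filter (fun y => Quotient.mk (negQuotSetoid G) y = Quotient.mk (negQuotSetoid G) x)
        = ({x} : Finset G) := by
      ext y
      simp only [Finset.mem_filter, Finset.mem_singleton, hmkeq]
      constructor
      · rintro ⟨_, (rfl | rfl)⟩
        · rfl
        · exact hx2.symm
      · rintro rfl; exact ⟨hxC, Or.inl rfl⟩
    rw [hfilC, Finset.card_singleton]
  · have hcard : ({x, -x} : Finset G).card = 2 := by
      rw [Finset.card_pair hx2]
    rw [hcard]
    have hfilC : C.filter (fun y => Quotient.mk (negQuotSetoid G) y = Quotient.mk (negQuotSetoid G) x)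
        = (∅ : Finset G) := by
      ext y
      simp only [Finset.mem_filter, Finset.notMem_empty, iff_false, not_and, hmkeq, hCmem]
      rintro ⟨h1, h2⟩ hy
      have hyy : y = -y := h1.symm.trans h2
      rcases hy with rfl | rfl
      · exact hx2 hyy
      · rw [neg_neg] at hyy
        exact hx2 hyy.symm
    rw [hfilC, Finset.card_empty]
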